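/- arXiv:1401.1266 — 2 statements merged into one kernel-verified Lean document; each statement's English description precedes it below -/
import Mathlib

section
/- Let A be a c.e. subset of ℕ. Suppose (R_i)_{i∈ℕ} and (D_i)_{i∈ℕ} are two families of pairwise disjoint c.e. sets, each of which generates D(A), and every R_i is computable. Then every D_i is computable. -/
open Set Function

/-- A set of naturals is computably enumerable (c.e.) -/
def CESet (A : Set ℕ) : Prop := REPred (· ∈ A)

/-- A set of naturals is computable -/
def ComputableSet (A : Set ℕ) : Prop := ComputablePred (· ∈ A)

/-- X ⊆* Y : X is almost contained in Y -/
def SubsetStar (X Y : Set ℕ) : Prop := (X \ Y).Finite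

/-- X =* Y : X and Y differ by a finite set -/
def EqStar (X Y : Set ℕ) : Prop := (X \ Y).Finite ∧ (Y \ X).Finite

/-- G is a generating set for 𝒟(A): a countable family of c.e. sets, each disjoint
from A, such that every c.e. set disjoint from A is almost covered by finitely many
members of G. -/
def Generates (A : Set ℕ) (G : Set (Set ℕ)) : Prop :=
  G.Countable ∧ (∀ X ∈ G, CESet X) ∧ (∀ X ∈ G, Disjoint X A) ∧
  ∀ D : Set ℕ, CESet D → Disjoint D A →
    ∃ F : Set (Set ℕ), F ⊆ G ∧ F.Finite ∧ SubsetStar D (⋃₀ F)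

/-- S is simple -/
def SimpleSet (S : Set ℕ) : Prop :=
  CESet S ∧ Sᶜ.Infinite ∧ ∀ W : Set ℕ, CESet W → Disjoint W S → W.Finite

/-- A is 𝒟-maximal -/
def DMaximal (A : Set ℕ) : Prop :=
  CESet A ∧ ∀ W : Set ℕ, CESet W → ∃ D : Set ℕ, CESet D ∧ Disjoint D A ∧
    (SubsetStar W (A ∪ D) ∨ EqStar (W ∪ A ∪ D) Set.univ)

/-- M is r-maximal -/
def RMaximal (M : Set ℕ) : Prop :=
  CESet M ∧ Mᶜ.Infinite ∧
    ∀ R : Set ℕ, ComputableSet R → (R ∩ Mᶜ).Finite ∨ (Rᶜ ∩ Mᶜ).Finite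

/-- M is maximal -/
def MaximalSet (M : Set ℕ) : Prop :=
  CESet M ∧ Mᶜ.Infinite ∧
    ∀ W : Set ℕ, CESet W → M ⊆ W → (W \ M).Finite ∨ Wᶜ.Finite

/-- B is atomless -/
def AtomlessSet (B : Set ℕ) : Prop :=
  ∀ C : Set ℕ, CESet C → B ⊆ C → Cᶜ.Infinite →
    ∃ E : Set ℕ, CESet E ∧ SubsetStar C E ∧ (E \ C).Infinite ∧ Eᶜ.Infinite

/-- A0, A1 form a Friedberg splitting of A -/
def FriedbergSplitting (A0 A1 A : Set ℕ) : Prop :=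
  CESet A0 ∧ CESet A1 ∧ Disjoint A0 A1 ∧ A0 ∪ A1 = A ∧
    ∀ W : Set ℕ, CESet W → ¬ CESet (W \ A) → ¬ CESet (W \ A0) ∧ ¬ CESet (W \ A1)

/-- E is a major subset of D -/
def MajorIn (E D : Set ℕ) : Prop :=
  CESet E ∧ CESet D ∧ E ⊆ D ∧ (D \ E).Infinite ∧
    ∀ W : Set ℕ, CESet W → SubsetStar Dᶜ W → SubsetStar Eᶜ W

/-- H is hh-simple: the lattice of c.e. supersets of H mod finite is a boolean algebra -/
def HHSimple (H : Set ℕ) : Prop :=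
  CESet H ∧ Hᶜ.Infinite ∧
    ∀ W : Set ℕ, CESet W → ∃ V : Set ℕ, CESet V ∧
      EqStar ((W ∪ H) ∩ (V ∪ H)) H ∧ EqStar (W ∪ V ∪ H) Set.univ

/-- A is strongly r-separable -/
def StronglyRSeparable (A : Set ℕ) : Prop :=
  ∀ B : Set ℕ, CESet B → Disjoint B A →
    ∃ C : Set ℕ, ComputableSet C ∧ B ⊆ C ∧ Disjoint C A ∧ (C \ B).Infinite

/-- Structure of a Type 5 generating family: D0 together with the R_i. -/
def Type5Family (D0 : Set ℕ) (R : ℕ → Set ℕ) : Prop :=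
  CESet D0 ∧ ¬ ComputableSet D0 ∧ D0.Infinite ∧
  Function.Injective R ∧ (∀ i, D0 ≠ R i) ∧
  (∀ i, ComputableSet (R i) ∧ (R i).Infinite) ∧
  Pairwise (Function.onFun Disjoint R) ∧
  (∀ i, Disjoint D0 (R i))

/-- Structure of a Type 7 generating family: D0 together with the R_i. -/
def Type7Family (D0 : Set ℕ) (R : ℕ → Set ℕ) : Prop :=
  CESet D0 ∧ ¬ ComputableSet D0 ∧
  Function.Injective R ∧ (∀ i, D0 ≠ R i) ∧
  (∀ i, ComputableSet (R i) ∧ (R i).Infinite) ∧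
  Pairwise (Function.onFun Disjoint R) ∧
  {i : ℕ | (D0 ∩ R i).Nonempty}.Infinite

/-- Structure of a Type 8 generating family: the D_i together with the R_i. -/
def Type8Family (D R : ℕ → Set ℕ) : Prop :=
  Function.Injective D ∧ Function.Injective R ∧ (∀ i j, D i ≠ R j) ∧
  (∀ i, CESet (D i) ∧ ¬ ComputableSet (D i)) ∧
  Pairwise (Function.onFun Disjoint D) ∧
  (∀ i, ComputableSet (R i) ∧ (R i).Infinite) ∧
  Pairwise (Function.onFun Disjoint R)

/-- Structure of a Type 9 generating family: the nested D_i together with the R_i. -/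
def Type9Family (D R : ℕ → Set ℕ) : Prop :=
  Function.Injective R ∧ (∀ i j, D i ≠ R j) ∧
  (∀ i, ComputableSet (R i) ∧ (R i).Infinite) ∧
  Pairwise (Function.onFun Disjoint R) ∧
  (∀ i, CESet (D i) ∧ ¬ ComputableSet (D i) ∧ (D i).Infinite) ∧
  (∀ l, D l ⊆ D (l + 1)) ∧
  (∀ l, ¬ CESet (D (l + 1) \ D l)) ∧
  (∀ l, {j : ℕ | (R j \ D l).Infinite}.Infinite)

def IsType1 (G : Set (Set ℕ)) : Prop := G = {∅}

def IsType2 (G : Set (Set ℕ)) : Prop :=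
  ∃ R : Set ℕ, G = {R} ∧ ComputableSet R ∧ R.Infinite

def IsType3 (G : Set (Set ℕ)) : Prop :=
  ∃ W : Set ℕ, G = {W} ∧ CESet W ∧ ¬ ComputableSet W ∧ W.Infinite

def IsType4 (G : Set (Set ℕ)) : Prop :=
  ∃ R : ℕ → Set ℕ, G = Set.range R ∧ Function.Injective R ∧
    (∀ i, ComputableSet (R i) ∧ (R i).Infinite) ∧
    Pairwise (Function.onFun Disjoint R)

def IsType5 (G : Set (Set ℕ)) : Prop :=
  ∃ (D0 : Set ℕ) (R : ℕ → Set ℕ), G = insert D0 (Set.range R) ∧ Type5Family D0 R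

def IsType6 (G : Set (Set ℕ)) : Prop :=
  ∃ D : ℕ → Set ℕ, G = Set.range D ∧ Function.Injective D ∧
    (∀ i, CESet (D i) ∧ ¬ ComputableSet (D i) ∧ (D i).Infinite) ∧
    Pairwise (Function.onFun Disjoint D)

def IsType7 (G : Set (Set ℕ)) : Prop :=
  ∃ (D0 : Set ℕ) (R : ℕ → Set ℕ), G = insert D0 (Set.range R) ∧ Type7Family D0 R

def IsType8 (G : Set (Set ℕ)) : Prop :=
  ∃ D R : ℕ → Set ℕ, G = Set.range D ∪ Set.range R ∧ Type8Family D R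

def IsType9 (G : Set (Set ℕ)) : Prop :=
  ∃ D R : ℕ → Set ℕ, G = Set.range D ∪ Set.range R ∧ Type9Family D R

def IsType10 (G : Set (Set ℕ)) : Prop :=
  ∃ D : ℕ → Set ℕ, G = Set.range D ∧
    (∀ i, CESet (D i) ∧ ¬ ComputableSet (D i) ∧ (D i).Infinite) ∧
    (∀ l, D l ⊆ D (l + 1)) ∧
    (∀ l, ¬ CESet (D (l + 1) \ D l))

/-- G is a generating set of Type n (n = 1, …, 10). -/
def GenTypeN (n : ℕ) (G : Set (Set ℕ)) : Prop :=
  match n with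
  | 1 => IsType1 G
  | 2 => IsType2 G
  | 3 => IsType3 G
  | 4 => IsType4 G
  | 5 => IsType5 G
  | 6 => IsType6 G
  | 7 => IsType7 G
  | 8 => IsType8 G
  | 9 => IsType9 G
  | 10 => IsType10 G
  | _ => False

/-- The c.e. set A is of Type n: 𝒟(A) has a generating set of Type n
but no generating set of any Type m < n. -/
def SetOfType (A : Set ℕ) (n : ℕ) : Prop :=
  (∃ G : Set (Set ℕ), Generates A G ∧ GenTypeN n G) ∧
  ∀ m : ℕ, m < n → ¬ ∃ G : Set (Set ℕ), Generates A G ∧ GenTypeN m G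

/-- (F_i) is an A-special list. -/
def ASpecialList (A : Set ℕ) (F : ℕ → Set ℕ) : Prop :=
  F 0 = A ∧ (∀ i, CESet (F i) ∧ ¬ ComputableSet (F i)) ∧
  Pairwise (Function.onFun Disjoint F) ∧
  ∀ W : Set ℕ, CESet W → ∃ i : ℕ,
    SubsetStar W (⋃ l ≤ i, F l) ∨ EqStar (W ∪ ⋃ l ≤ i, F l) Set.univ

lemma myRe.union {p q : ℕ → Prop} (hp : REPred p) (hq : REPred q) :
    REPred fun a => p a ∨ q a := by
  obtain ⟨k, hk, H⟩ := Partrec.merge' hp hq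
  exact hk.dom_re.of_eq fun a => by
    rw [(H a).2]; simp [Part.assert]

lemma myRe.inter {p q : ℕ → Prop} (hp : REPred p) (hq : REPred q) :
    REPred fun a => p a ∧ q a := by
  have : Partrec fun a => (Part.assert (p a) fun _ => Part.some ()).bind
      fun _ => Part.assert (q a) fun _ => Part.some () :=
    hp.bind ((hq.comp (Computable.fst)).to₂ : _)
  exact this.dom_re.of_eq fun a => by simp [Part.assert]

lemma myComp.or {p q : ℕ → Prop} (hp : ComputablePred p) (hq : ComputablePred q) :
    ComputablePred fun a => p a ∨ q a := by
  obtain ⟨f, hf, rfl⟩ := ComputablePred.computable_iff.1 hp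
  obtain ⟨g, hg, rfl⟩ := ComputablePred.computable_iff.1 hq
  exact ComputablePred.computable_iff.2 ⟨fun a => f a || g a,
    (Computable.cond hf (Computable.const true) hg).of_eq fun a => by cases f a <;> simp,
    by funext a; simp⟩

lemma myComp.eq_const (x : ℕ) : ComputablePred fun a : ℕ => a = x :=
  ComputablePred.computable_iff.2 ⟨fun a => a == x,
    (Primrec.beq.comp .id (.const x)).to_comp, by funext a; simp⟩

lemma myComp.finite {S : Set ℕ} (hS : S.Finite) : ComputablePred (· ∈ S) := by
  refine Set.Finite.induction_on S hS ?_ ?_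
  · exact ComputablePred.computable_iff.2 ⟨fun _ => false, Computable.const _, by simp⟩
  · intro x S _ _ ih
    exact (myComp.or (myComp.eq_const x) ih).of_eq fun a => by simp [eq_comm, or_comm]

lemma myCE.of_computable {X : Set ℕ} (h : ComputableSet X) : CESet X := h.to_re

lemma myCE.finite {X : Set ℕ} (h : X.Finite) : CESet X := (myComp.finite h).to_re

lemma myCE.union {X Y : Set ℕ} (hX : CESet X) (hY : CESet Y) : CESet (X ∪ Y) :=
  (myRe.union hX hY).of_eq fun a => (Set.mem_union a X Y).symm

lemma myCE.inter {X Y : Set ℕ} (hX : CESet X) (hY : CESet Y) : CESet (X ∩ Y) :=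
  (myRe.inter hX hY).of_eq fun a => (Set.mem_inter_iff a X Y).symm

lemma myComp.union {X Y : Set ℕ} (hX : ComputableSet X) (hY : ComputableSet Y) :
    ComputableSet (X ∪ Y) :=
  (myComp.or hX hY).of_eq fun a => (Set.mem_union a X Y).symm

lemma myComp.compl {X : Set ℕ} (hX : ComputableSet X) : ComputableSet Xᶜ :=
  hX.not.of_eq fun a => (Set.mem_compl_iff X a).symm

lemma myComp.empty : ComputableSet (∅ : Set ℕ) := myComp.finite Set.finite_empty

lemma myComp.sUnion {F : Set (Set ℕ)} (hF : F.Finite) (h : ∀ X ∈ F, ComputableSet X) :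
    ComputableSet (⋃₀ F) := by
  induction F, hF using Set.Finite.induction_on with
  | empty => simpa using myComp.empty
  | @insert X F _ _ ih =>
      rw [Set.sUnion_insert]
      exact myComp.union (h X (Set.mem_insert _ _))
        (ih fun Y hY => h Y (Set.mem_insert_of_mem _ hY))

lemma myCE.sUnion {F : Set (Set ℕ)} (hF : F.Finite) (h : ∀ X ∈ F, CESet X) :
    CESet (⋃₀ F) := by
  induction F, hF using Set.Finite.induction_on with
  | empty => simpa using myCE.of_computable myComp.empty
  | @insert X F _ _ ih =>
      rw [Set.sUnion_insert]
      exact myCE.union (h X (Set.mem_insert _ _))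
        (ih fun Y hY => h Y (Set.mem_insert_of_mem _ hY))

lemma myCE.finite_mod {X Y : Set ℕ} (hX : CESet X) (h1 : (X \ Y).Finite)
    (h2 : (Y \ X).Finite) : CESet Y := by
  have := myRe.union (myRe.inter hX ((myComp.finite h1).not.to_re)) (myCE.finite h2)
  exact this.of_eq fun a => by
    simp only [Set.mem_diff]
    constructor
    · rintro (⟨hx, h⟩ | ⟨hy, _⟩)
      · by_contra hy; exact h ⟨hx, hy⟩
      · exact hy
    · intro hy
      by_cases hx : a ∈ X
      · exact Or.inl ⟨hx, fun h => h.2 hy⟩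
      · exact Or.inr ⟨hy, hx⟩

theorem stmt_3 (A : Set ℕ) (hA : CESet A) (R D : ℕ → Set ℕ)
    (hRce : ∀ i, CESet (R i)) (hDce : ∀ i, CESet (D i))
    (hRdisj : Pairwise (Function.onFun Disjoint R))
    (hDdisj : Pairwise (Function.onFun Disjoint D))
    (hRcomp : ∀ i, ComputableSet (R i))
    (hgenR : Generates A (Set.range R)) (hgenD : Generates A (Set.range D)) :
    ∀ i, ComputableSet (D i) := by
  intro i
  obtain ⟨-, -, hRdisjA, hRgen⟩ := hgenR
  obtain ⟨-, -, hDdisjA, hDgen⟩ := hgenD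
  have hDiA : Disjoint (D i) A := hDdisjA _ ⟨i, rfl⟩
  obtain ⟨FR, hFRsub, hFRfin, hFRstar⟩ := hRgen (D i) (hDce i) hDiA
  set U := ⋃₀ FR with hU
  have hUcomp : ComputableSet U := myComp.sUnion hFRfin fun X hX => by
    obtain ⟨j, rfl⟩ := hFRsub hX; exact hRcomp j
  have hUce : CESet U := myCE.of_computable hUcomp
  have hUA : Disjoint U A := by
    rw [Set.disjoint_sUnion_left]
    intro X hX; exact hRdisjA X (hFRsub hX)
  obtain ⟨FD, hFDsub, hFDfin, hFDstar⟩ := hDgen U hUce hUA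
  set V := ⋃₀ (FD \ {D i}) with hV
  have hVce : CESet V := myCE.sUnion (hFDfin.subset Set.diff_subset) fun X hX => by
    obtain ⟨j, rfl⟩ := hFDsub hX.1; exact hDce j
  have hVDi : Disjoint V (D i) := by
    rw [Set.disjoint_sUnion_left]
    rintro X ⟨hX, hne⟩
    obtain ⟨j, rfl⟩ := hFDsub hX
    have hji : j ≠ i := fun h => hne (by simp [h])
    exact hDdisj hji
  have h1 : ((Uᶜ ∪ V) \ (D i)ᶜ).Finite := by
    apply hFRstar.subset
    rintro a ⟨hUV, ha⟩
    rw [Set.mem_compl_iff, not_not] at ha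
    rcases hUV with hu | hv
    · exact ⟨ha, hu⟩
    · exact absurd ha (Set.disjoint_left.1 hVDi hv)
  have h2 : ((D i)ᶜ \ (Uᶜ ∪ V)).Finite := by
    apply hFDstar.subset
    rintro a ⟨ha, hUV⟩
    rw [Set.mem_union, not_or, Set.mem_compl_iff, not_not] at hUV
    refine ⟨hUV.1, fun hmem => ?_⟩
    obtain ⟨X, hX, haX⟩ := hmem
    by_cases hXi : X = D i
    · exact ha (hXi ▸ haX)
    · exact hUV.2 ⟨X, ⟨hX, hXi⟩, haX⟩
  have hcompl : CESet ((D i)ᶜ) :=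
    myCE.finite_mod (myCE.union (myCE.of_computable (myComp.compl hUcomp)) hVce) h1 h2
  exact ComputablePred.computable_iff_re_compl_re'.2
    ⟨hDce i, hcompl.of_eq fun a => by simp⟩
end

section
/- Let A be a c.e. subset of ℕ, let (D_i)_{i∈ℕ} be a family of pairwise disjoint c.e. sets, and let G be a countable family of c.e. sets such that {D_i : i ∈ ℕ} ∪ G generates D(A). Then there exists a family (D'_i)_{i∈ℕ} of pairwise disjoint c.e. sets whose union equals ℕ ∖ A and such that {D'_i : i ∈ ℕ} ∪ G generates D(A). -/
open Set Function

lemma ce_empty : CESet (∅ : Set ℕ) := by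
  apply ComputablePred.to_re
  rw [ComputablePred.computable_iff]
  exact ⟨fun _ => false, Computable.const _, by simp [Set.mem_empty_iff_false]⟩

lemma ce_singleton (n : ℕ) : CESet ({n} : Set ℕ) := by
  apply ComputablePred.to_re
  rw [ComputablePred.computable_iff]
  exact ⟨fun x => decide (x = n),
    Primrec.to_comp (Primrec.eq.comp Primrec.id (Primrec.const n)).decide,
    by ext x; simp⟩

theorem stmt_4 (A : Set ℕ) (hA : CESet A) (D : ℕ → Set ℕ)
    (hce : ∀ i, CESet (D i)) (hdisj : Pairwise (Function.onFun Disjoint D))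
    (G : Set (Set ℕ)) (hgen : Generates A (Set.range D ∪ G)) :
    ∃ D' : ℕ → Set ℕ, (∀ i, CESet (D' i)) ∧
      Pairwise (Function.onFun Disjoint D') ∧
      (⋃ i, D' i) = Aᶜ ∧ Generates A (Set.range D' ∪ G) := by
  classical
  obtain ⟨hcnt, hceG, hdisjA, hcov⟩ := hgen
  set S : Set ℕ := ⋃ i, D i with hS
  set D' : ℕ → Set ℕ := fun k =>
    if k % 2 = 0 then D (k / 2)
    else (if k / 2 ∈ A ∪ S then ∅ else {k / 2}) with hD'
  have hDA : ∀ i, Disjoint (D i) A := fun i =>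
    hdisjA _ (Or.inl ⟨i, rfl⟩)
  have hsub : Set.range D ⊆ Set.range D' := by
    rintro _ ⟨i, rfl⟩
    exact ⟨2 * i, by simp [hD', Nat.mul_div_cancel_left]⟩
  have hceD' : ∀ k, CESet (D' k) := by
    intro k
    by_cases h0 : k % 2 = 0
    · simpa [hD', h0] using hce (k / 2)
    · by_cases h1 : k / 2 ∈ A ∪ S
      · simp only [hD', if_neg h0, if_pos h1]; exact ce_empty
      · simp only [hD', if_neg h0, if_neg h1]; exact ce_singleton (k / 2)
  have hsing : ∀ k, k % 2 ≠ 0 → D' k ⊆ (A ∪ S)ᶜ ∩ {k / 2} := by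
    intro k h0 x hx
    simp only [hD', if_neg h0] at hx
    by_cases h1 : k / 2 ∈ A ∪ S
    · simp [h1] at hx
    · simp only [if_neg h1, Set.mem_singleton_iff] at hx
      subst hx; exact ⟨h1, rfl⟩
  have hdisj' : Pairwise (Function.onFun Disjoint D') := by
    intro i j hij
    unfold Function.onFun
    by_cases hi : i % 2 = 0 <;> by_cases hj : j % 2 = 0
    · have : i / 2 ≠ j / 2 := by
        intro h; apply hij; omega
      simpa [hD', hi, hj] using hdisj this
    · refine Set.disjoint_left.2 fun x hx hx' => ?_
      have := (hsing j hj hx').1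
      simp only [hD', if_pos hi] at hx
      exact this (Or.inr (Set.mem_iUnion.2 ⟨i / 2, hx⟩))
    · refine Set.disjoint_left.2 fun x hx hx' => ?_
      have := (hsing i hi hx).1
      simp only [hD', if_pos hj] at hx'
      exact this (Or.inr (Set.mem_iUnion.2 ⟨j / 2, hx'⟩))
    · have hne : i / 2 ≠ j / 2 := by omega
      refine Set.disjoint_left.2 fun x hx hx' => ?_
      have h1 := (hsing i hi hx).2
      have h2 := (hsing j hj hx').2
      simp only [Set.mem_singleton_iff] at h1 h2
      exact hne (h1 ▸ h2 ▸ rfl)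
  have hDA' : ∀ k, Disjoint (D' k) A := by
    intro k
    by_cases h0 : k % 2 = 0
    · simpa [hD', h0] using hDA (k / 2)
    · refine Set.disjoint_left.2 fun x hx hxA => ?_
      exact (hsing k h0 hx).1 (Or.inl hxA)
  have hunion : (⋃ k, D' k) = Aᶜ := by
    ext x
    simp only [Set.mem_iUnion, Set.mem_compl_iff]
    constructor
    · rintro ⟨k, hk⟩
      exact fun hxA => (hDA' k).ne_of_mem hk hxA rfl
    · intro hxA
      by_cases hxS : x ∈ S
      · obtain ⟨_, ⟨i, rfl⟩, hi⟩ := hxS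
        exact ⟨2 * i, by simpa [hD', Nat.mul_div_cancel_left] using hi⟩
      · refine ⟨2 * x + 1, ?_⟩
        have h0 : (2 * x + 1) % 2 ≠ 0 := by omega
        have h1 : (2 * x + 1) / 2 = x := by omega
        have h2 : x ∉ A ∪ S := by
          rintro (h | h); exacts [hxA h, hxS h]
        simp only [hD', if_neg h0, h1, if_neg h2]
        exact Set.mem_singleton x
  refine ⟨D', hceD', hdisj', hunion, ?_, ?_, ?_, ?_⟩
  · exact ((Set.countable_range D').union (hcnt.mono Set.subset_union_right))
  · rintro X (⟨k, rfl⟩ | hX)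
    · exact hceD' k
    · exact hceG X (Or.inr hX)
  · rintro X (⟨k, rfl⟩ | hX)
    · exact hDA' k
    · exact hdisjA X (Or.inr hX)
  · intro W hW hWA
    obtain ⟨F, hFsub, hFfin, hFcov⟩ := hcov W hW hWA
    refine ⟨F, fun x hx => ?_, hFfin, hFcov⟩
    rcases hFsub hx with h | h
    · exact Or.inl (hsub h)
    · exact Or.inr h
end
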